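/- Let r ≥ 3, let F be a family of k-element subsets of [n] = {1,…,n} containing no 1-focal family of size r, and let m = ⌈(r−2)k/(r−1)⌉. Then for every A ∈ F, the number of m-element subsets S ⊆ A that are own-subsets of A (i.e., S ⊄ B for every B ∈ F with B ≠ A) is at least (1/(r−1))·C(k, m), where C(k, m) is the binomial coefficient. -/

import Mathlib

open Finset


/-- A family consisting of a focus set `A₀` and `m` further sets `As 0, …, As (m-1)`
(viewed as subsets of `[n]`, i.e. characteristic vectors in `{0,1}^n`) is *1-focal with
focus `A₀`* if for every `i ∈ A₀`, at most one of the sets `As j` misses `i`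
(equivalently, at least `m - 1` of the `m` characteristic-vector entries equal `1`). -/
def IsOneFocalWithFocus {n m : ℕ} (A₀ : Finset (Fin n)) (As : Fin m → Finset (Fin n)) : Prop :=
  ∀ i ∈ A₀, ∀ j j' : Fin m, i ∉ As j → i ∉ As j' → j = j'

/-- A family `F` of subsets of `[n]` contains a 1-focal family of size `r` if some `r`
distinct members `A₀, As 0, …, As (r-2)` of `F` are 1-focal with focus `A₀`. -/
def ContainsOneFocalFamily {n : ℕ} (F : Finset (Finset (Fin n))) (r : ℕ) : Prop :=
  ∃ A₀ ∈ F, ∃ As : Fin (r - 1) → Finset (Fin n),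
    (∀ j, As j ∈ F) ∧ Function.Injective As ∧ (∀ j, As j ≠ A₀) ∧ IsOneFocalWithFocus A₀ As

/-- If `F` is a family of `k`-element subsets of `[n]` with no 1-focal family of size `r`
and `m = ⌈(r-2)k/(r-1)⌉`, then for every `A ∈ F` the number of `m`-element subsets of `A`
that are own-subsets of `A` (contained in no other member of `F`) is at least
`(1/(r-1))·C(k,m)`. -/


private def nu (t : ℕ) : ℕ → ℕ → ℕ
  | _, 0 => 1
  | x, c + 1 => x.choose t * nu t (x - t) c

private lemma nu_pos (t : ℕ) : ∀ (c x : ℕ), t * c ≤ x → 0 < nu t x c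
  | 0, _, _ => Nat.one_pos
  | c + 1, x, h => by
    rw [Nat.mul_succ] at h
    have h1 : t ≤ x := le_trans (Nat.le_add_left _ _) h
    have h2 : t * c ≤ x - t := Nat.le_sub_of_add_le h
    exact Nat.mul_pos (Nat.choose_pos h1) (nu_pos t c (x - t) h2)

private def Tup (n t : ℕ) (X : Finset (Fin n)) (c : ℕ) : Finset (Fin c → Finset (Fin n)) :=
  Finset.univ.filter fun f =>
    (∀ j, f j ∈ X.powersetCard t) ∧ ∀ j j', j ≠ j' → Disjoint (f j) (f j')

private lemma mem_Tup {n t : ℕ} {X : Finset (Fin n)} {c : ℕ} {f : Fin c → Finset (Fin n)} :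
    f ∈ Tup n t X c ↔
      (∀ j, f j ∈ X.powersetCard t) ∧ ∀ j j', j ≠ j' → Disjoint (f j) (f j') := by
  simp [Tup]

private lemma Tup_fiber {n t : ℕ} {X T : Finset (Fin n)} {c : ℕ}
    (hT : T ⊆ X) (hTc : T.card = t) :
    ((Tup n t X (c + 1)).filter fun f => f 0 = T).card = (Tup n t (X \ T) c).card := by
  classical
  apply Finset.card_nbij' (fun f => f ∘ Fin.succ) (fun g => Fin.cases T g)
  · intro f hf
    obtain ⟨hf1, hf2⟩ := mem_Tup.mp (Finset.mem_filter.mp hf).1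
    have hf0 : f 0 = T := (Finset.mem_filter.mp hf).2
    rw [Finset.mem_coe, mem_Tup]
    constructor
    · intro j
      obtain ⟨hsub, hcard⟩ := Finset.mem_powersetCard.mp (hf1 j.succ)
      refine Finset.mem_powersetCard.mpr ⟨Finset.subset_sdiff.mpr ⟨hsub, ?_⟩, hcard⟩
      have := hf2 j.succ 0 (Fin.succ_ne_zero j)
      rw [hf0] at this
      exact this
    · intro j j' hjj
      exact hf2 _ _ (fun h => hjj (Fin.succ_injective _ h))
  · intro g hg
    obtain ⟨hg1, hg2⟩ := mem_Tup.mp hg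
    have hsub : ∀ a : Fin c, g a ⊆ X \ T := fun a => (Finset.mem_powersetCard.mp (hg1 a)).1
    have hdT : ∀ a : Fin c, Disjoint T (g a) :=
      fun a => disjoint_sdiff_self_right.mono_right (hsub a)
    rw [Finset.mem_coe, Finset.mem_filter]
    refine ⟨?_, by simp⟩
    rw [mem_Tup]
    constructor
    · intro j
      refine Fin.cases ?_ ?_ j
      · simpa using Finset.mem_powersetCard.mpr ⟨hT, hTc⟩
      · intro j'
        simp only [Fin.cases_succ]
        obtain ⟨hs, hcard⟩ := Finset.mem_powersetCard.mp (hg1 j')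
        exact Finset.mem_powersetCard.mpr ⟨hs.trans Finset.sdiff_subset, hcard⟩
    · intro j j' hjj
      rcases Fin.eq_zero_or_eq_succ j with rfl | ⟨a, rfl⟩ <;>
        rcases Fin.eq_zero_or_eq_succ j' with rfl | ⟨b, rfl⟩
      · exact absurd rfl hjj
      · simpa using hdT b
      · simpa using (hdT a).symm
      · simpa using hg2 a b (fun hab => hjj (by rw [hab]))
  · intro f hf
    have hf0 : f 0 = T := (Finset.mem_filter.mp hf).2
    funext j
    refine Fin.cases ?_ ?_ j
    · simp [hf0]
    · intro j'; simp
  · intro g hg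
    funext j
    simp

private lemma Tup_card {n t : ℕ} : ∀ (c : ℕ) (X : Finset (Fin n)),
    (Tup n t X c).card = nu t X.card c
  | 0, X => by
    rw [show Tup n t X 0 = Finset.univ from ?_]
    · simp [nu]
    · rw [Finset.eq_univ_iff_forall]
      intro f
      exact mem_Tup.mpr ⟨fun j => j.elim0, fun j => j.elim0⟩
  | c + 1, X => by
    classical
    rw [Finset.card_eq_sum_card_fiberwise
      (f := fun f => f 0) (t := X.powersetCard t) (fun f hf => (mem_Tup.mp hf).1 0)]
    have hstep : ∀ T ∈ X.powersetCard t,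
        ((Tup n t X (c + 1)).filter fun f => f 0 = T).card = nu t (X.card - t) c := by
      intro T hT
      obtain ⟨hTX, hTc⟩ := Finset.mem_powersetCard.mp hT
      rw [Tup_fiber hTX hTc, Tup_card c (X \ T), Finset.card_sdiff_of_subset hTX, hTc]
    rw [Finset.sum_congr rfl hstep, Finset.sum_const, smul_eq_mul,
      Finset.card_powersetCard]
    rfl


private lemma Tup_comp {n t : ℕ} {X : Finset (Fin n)} {c : ℕ} {f : Fin c → Finset (Fin n)}
    (hf : f ∈ Tup n t X c) (e : Fin c ≃ Fin c) : (f ∘ e) ∈ Tup n t X c := by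
  rw [mem_Tup] at hf ⊢
  exact ⟨fun j => hf.1 (e j), fun j j' hjj => hf.2 _ _ (fun h => hjj (e.injective h))⟩

private lemma Tup_filter_coord {n t : ℕ} {X : Finset (Fin n)} {c : ℕ} (j j₀ : Fin c)
    (p : Finset (Fin n) → Prop) [DecidablePred p] :
    ((Tup n t X c).filter fun f => p (f j)).card
      = ((Tup n t X c).filter fun f => p (f j₀)).card := by
  classical
  apply Finset.card_nbij' (fun f => f ∘ Equiv.swap j₀ j) (fun f => f ∘ Equiv.swap j₀ j)
  · intro f hf
    obtain ⟨hf1, hf2⟩ := Finset.mem_filter.mp hf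
    refine Finset.mem_filter.mpr ⟨Tup_comp hf1 _, ?_⟩
    simpa [Equiv.swap_apply_left] using hf2
  · intro f hf
    obtain ⟨hf1, hf2⟩ := Finset.mem_filter.mp hf
    refine Finset.mem_filter.mpr ⟨Tup_comp hf1 _, ?_⟩
    simpa [Equiv.swap_apply_right] using hf2
  · intro f _; funext x; simp [Equiv.swap_apply_self]
  · intro f _; funext x; simp [Equiv.swap_apply_self]

theorem own_subsets_lower_bound (r n k : ℕ) (hr : 3 ≤ r)
    (F : Finset (Finset (Fin n))) (hunif : ∀ A ∈ F, A.card = k)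
    (hF : ¬ ContainsOneFocalFamily F r)
    (m : ℕ) (hm : m = ⌈(((r : ℚ) - 2) * k) / ((r : ℚ) - 1)⌉₊)
    (A : Finset (Fin n)) (hA : A ∈ F) :
    (1 / ((r : ℝ) - 1)) * (k.choose m : ℝ) ≤
      (((A.powersetCard m).filter (fun S => ∀ B ∈ F, B ≠ A → ¬ S ⊆ B)).card : ℝ) := by
  classical
  have hk : A.card = k := hunif A hA
  have hrQ : (3 : ℚ) ≤ (r : ℚ) := by exact_mod_cast hr
  have hr1Q : (0 : ℚ) < (r : ℚ) - 1 := by linarith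
  have hmq : ((r : ℚ) - 2) * k / ((r : ℚ) - 1) ≤ (m : ℚ) := by
    rw [hm]; exact Nat.le_ceil _
  have hmk : m ≤ k := by
    rw [hm]
    apply Nat.ceil_le.mpr
    rw [div_le_iff₀ hr1Q]
    nlinarith [Nat.cast_nonneg (α := ℚ) k]
  have hkeyQ : ((r : ℚ) - 2) * k ≤ ((r : ℚ) - 1) * m := by
    rw [div_le_iff₀ hr1Q] at hmq; linarith
  have htsQ : ((r : ℚ) - 1) * ((k : ℚ) - m) ≤ k := by nlinarith
  have hts : (r - 1) * (k - m) ≤ k := by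
    have hcast : (((r - 1) * (k - m) : ℕ) : ℚ) = ((r : ℚ) - 1) * ((k : ℚ) - m) := by
      push_cast [Nat.cast_sub hmk, Nat.cast_sub (show 1 ≤ r by omega)]
      ring
    exact_mod_cast hcast ▸ htsQ
  set t := k - m with ht
  obtain ⟨c, hc⟩ : ∃ c, r - 1 = c + 1 := ⟨r - 2, by omega⟩
  set Bt := (A.powersetCard t).filter (fun T => ∃ B ∈ F, B ≠ A ∧ A \ B ⊆ T) with hBt
  set Gt := (A.powersetCard t).filter (fun T => ¬ ∃ B ∈ F, B ≠ A ∧ A \ B ⊆ T) with hGt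
  -- the own-subsets are in bijection with Gt via complementation in A
  have hbij : ((A.powersetCard m).filter fun S => ∀ B ∈ F, B ≠ A → ¬ S ⊆ B).card
      = Gt.card := by
    apply Finset.card_nbij' (fun S => A \ S) (fun T => A \ T)
    · intro S hS
      obtain ⟨hS1, hS2⟩ := Finset.mem_filter.mp hS
      obtain ⟨hSA, hScard⟩ := Finset.mem_powersetCard.mp hS1
      refine Finset.mem_filter.mpr ⟨Finset.mem_powersetCard.mpr
        ⟨Finset.sdiff_subset, by rw [Finset.card_sdiff_of_subset hSA, hk, hScard]⟩, ?_⟩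
      rintro ⟨B, hBF, hBne, hBsub⟩
      refine hS2 B hBF hBne (fun x hx => ?_)
      by_contra hxB
      exact Finset.notMem_sdiff_of_mem_right hx
        (hBsub (Finset.mem_sdiff.mpr ⟨hSA hx, hxB⟩))
    · intro T hT
      obtain ⟨hT1, hT2⟩ := Finset.mem_filter.mp hT
      obtain ⟨hTA, hTcard⟩ := Finset.mem_powersetCard.mp hT1
      refine Finset.mem_filter.mpr ⟨Finset.mem_powersetCard.mpr
        ⟨Finset.sdiff_subset, by rw [Finset.card_sdiff_of_subset hTA, hk, hTcard]; omega⟩, ?_⟩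
      intro B hBF hBne hsub
      refine hT2 ⟨B, hBF, hBne, fun x hx => ?_⟩
      obtain ⟨hxA, hxB⟩ := Finset.mem_sdiff.mp hx
      by_contra hxT
      exact hxB (hsub (Finset.mem_sdiff.mpr ⟨hxA, hxT⟩))
    · intro S hS
      obtain ⟨hSA, _⟩ := Finset.mem_powersetCard.mp (Finset.mem_filter.mp hS).1
      beta_reduce
      rw [Finset.sdiff_sdiff_self_left, Finset.inter_eq_right.mpr hSA]
    · intro T hT
      obtain ⟨hTA, _⟩ := Finset.mem_powersetCard.mp (Finset.mem_filter.mp hT).1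
      beta_reduce
      rw [Finset.sdiff_sdiff_self_left, Finset.inter_eq_right.mpr hTA]
  -- partition
  have hpart : Bt.card + Gt.card = k.choose m := by
    rw [hBt, hGt, Finset.card_filter_add_card_filter_not,
      Finset.card_powersetCard, hk, ht, Nat.choose_symm hmk]
  -- no all-bad tuple
  set N := Tup n t A (c + 1) with hN
  have hbound : ∀ f ∈ N, ((Finset.univ : Finset (Fin (c + 1))).filter
      fun j => f j ∈ Bt).card ≤ c := by
    intro f hf
    by_contra hcon
    push_neg at hcon
    have huniv : (Finset.univ.filter fun j : Fin (c + 1) => f j ∈ Bt) = Finset.univ := by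
      apply Finset.eq_univ_of_card
      have h1 := Finset.card_filter_le (Finset.univ : Finset (Fin (c + 1)))
        (fun j => f j ∈ Bt)
      simp only [Finset.card_univ, Fintype.card_fin] at h1 ⊢
      omega
    have hall : ∀ j : Fin (c + 1), f j ∈ Bt := by
      intro j
      have : j ∈ Finset.univ.filter fun j : Fin (c + 1) => f j ∈ Bt := by
        rw [huniv]; exact Finset.mem_univ j
      exact (Finset.mem_filter.mp this).2
    have hex : ∀ j : Fin (c + 1), ∃ B, B ∈ F ∧ B ≠ A ∧ A \ B ⊆ f j := by
      intro j
      obtain ⟨B, hBF, hBne, hBsub⟩ := (Finset.mem_filter.mp (hall j)).2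
      exact ⟨B, hBF, hBne, hBsub⟩
    choose B hBF hBne hBsub using hex
    obtain ⟨hfP, hfD⟩ := mem_Tup.mp hf
    have hcastinj : Function.Injective (Fin.cast hc) := fun a b hab => by
      apply Fin.ext
      simpa using congrArg Fin.val hab
    apply hF
    refine ⟨A, hA, fun j => B (Fin.cast hc j), fun j => hBF _, ?_, fun j => hBne _, ?_⟩
    · intro j j' hjj
      by_contra hne
      have hne' : Fin.cast hc j ≠ Fin.cast hc j' := fun h => hne (hcastinj h)
      have hjj' : B (Fin.cast hc j) = B (Fin.cast hc j') := hjj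
      have hsub2 : A \ B (Fin.cast hc j) ⊆ f (Fin.cast hc j') := by
        have h0 := hBsub (Fin.cast hc j')
        rw [← hjj'] at h0
        exact h0
      have hemp : A \ B (Fin.cast hc j) = ∅ := by
        rw [Finset.eq_empty_iff_forall_notMem]
        intro x hx
        exact Finset.disjoint_left.mp (hfD _ _ hne') (hBsub _ hx) (hsub2 hx)
      have hAB : A ⊆ B (Fin.cast hc j) := Finset.sdiff_eq_empty_iff_subset.mp hemp
      exact hBne (Fin.cast hc j)
        (Finset.eq_of_subset_of_card_le hAB
          (by rw [hunif _ (hBF (Fin.cast hc j)), hk])).symm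
    · intro i hi j j' hij hij'
      by_contra hne
      have h1 : i ∈ f (Fin.cast hc j) := hBsub _ (Finset.mem_sdiff.mpr ⟨hi, hij⟩)
      have h2 : i ∈ f (Fin.cast hc j') := hBsub _ (Finset.mem_sdiff.mpr ⟨hi, hij'⟩)
      exact Finset.disjoint_left.mp
        (hfD _ _ (fun h => hne (hcastinj h))) h1 h2
  -- counting
  have hνdef : 0 < nu t (k - t) c := by
    apply nu_pos
    rw [hc] at hts
    rw [Nat.succ_mul] at hts
    rw [mul_comm]
    omega
  have hNcard : N.card = k.choose t * nu t (k - t) c := by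
    rw [hN, Tup_card, hk]
    rfl
  have hfib : (N.filter fun f => f 0 ∈ Bt).card = Bt.card * nu t (k - t) c := by
    have hfw := Finset.card_eq_sum_card_fiberwise
      (f := fun f : Fin (c + 1) → Finset (Fin n) => f 0)
      (s := N.filter fun f => f 0 ∈ Bt) (t := Bt)
      (fun f hf => (Finset.mem_filter.mp hf).2)
    rw [hfw]
    have hstep : ∀ T ∈ Bt, (((N.filter fun f => f 0 ∈ Bt)).filter fun f => f 0 = T).card
        = nu t (k - t) c := by
      intro T hT
      obtain ⟨hTA, hTc⟩ := Finset.mem_powersetCard.mp (Finset.mem_filter.mp hT).1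
      have heq : ((N.filter fun f => f 0 ∈ Bt).filter fun f => f 0 = T)
          = N.filter fun f => f 0 = T := by
        ext f
        simp only [Finset.mem_filter, and_assoc]
        constructor
        · rintro ⟨h1, _, h3⟩; exact ⟨h1, h3⟩
        · rintro ⟨h1, h3⟩; exact ⟨h1, h3 ▸ hT, h3⟩
      rw [heq, hN, Tup_fiber hTA hTc, Tup_card, Finset.card_sdiff_of_subset hTA, hTc, hk]
    rw [Finset.sum_congr rfl hstep, Finset.sum_const, smul_eq_mul]
  have hsymm : ∀ j : Fin (c + 1), (N.filter fun f => f j ∈ Bt).card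
      = (N.filter fun f => f 0 ∈ Bt).card := fun j =>
    Tup_filter_coord (n := n) (t := t) (X := A) (c := c + 1) j 0 (fun S => S ∈ Bt)
  have hdouble : (c + 1) * (Bt.card * nu t (k - t) c) ≤ c * N.card := by
    calc (c + 1) * (Bt.card * nu t (k - t) c)
        = ∑ j : Fin (c + 1), (N.filter fun f => f j ∈ Bt).card := by
          rw [Finset.sum_congr rfl (fun j _ => (hsymm j).trans hfib), Finset.sum_const,
            Finset.card_univ, Fintype.card_fin, smul_eq_mul]
      _ = ∑ f ∈ N, ((Finset.univ : Finset (Fin (c + 1))).filter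
            fun j => f j ∈ Bt).card := by
          simp_rw [Finset.card_filter]
          exact Finset.sum_comm
      _ ≤ ∑ _f ∈ N, c := Finset.sum_le_sum hbound
      _ = c * N.card := by rw [Finset.sum_const, smul_eq_mul, mul_comm]
  have hmain : (c + 1) * Bt.card ≤ c * k.choose t := by
    have h2 : ((c + 1) * Bt.card) * nu t (k - t) c ≤ (c * k.choose t) * nu t (k - t) c := by
      calc ((c + 1) * Bt.card) * nu t (k - t) c
          = (c + 1) * (Bt.card * nu t (k - t) c) := by ring
        _ ≤ c * N.card := hdouble
        _ = (c * k.choose t) * nu t (k - t) c := by rw [hNcard]; ring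
    exact Nat.le_of_mul_le_mul_right h2 hνdef
  have hct : k.choose t = k.choose m := by rw [ht, Nat.choose_symm hmk]
  rw [hct] at hmain
  -- finish
  have hfinal : k.choose m ≤ (c + 1) * Gt.card := by
    have h1 : (c + 1) * Bt.card + (c + 1) * Gt.card = (c + 1) * k.choose m := by
      rw [← Nat.left_distrib, hpart]
    have h2 : (c + 1) * k.choose m = c * k.choose m + k.choose m := by ring
    linarith
  rw [hbij]
  have hrR : (0 : ℝ) < (r : ℝ) - 1 := by
    have : (3 : ℝ) ≤ (r : ℝ) := by exact_mod_cast hr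
    linarith
  have hfinR : (k.choose m : ℝ) ≤ ((c : ℝ) + 1) * (Gt.card : ℝ) := by
    have := (Nat.cast_le (α := ℝ)).mpr hfinal
    push_cast at this
    linarith
  have hrc2 : r = c + 2 := by clear * - hc hr; omega
  rw [div_mul_eq_mul_div, one_mul, div_le_iff₀ hrR, hrc2]
  push_cast
  nlinarith [hfinR]
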